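/- Violated KKT conditions of the smooth function are preserved by every perturbed mesa maximum: Let h : [0,1]² → ℝ be continuously differentiable with L-Lipschitz gradient, where L ≤ 1/100, and suppose h(x) ∈ [0.49, 0.51] and ∇h(x) ∈ [−0.001, 0.001]² for all x ∈ [0,1]². Let ε > 0, let ℓ = 1/N for some positive integer N with ℓ ≤ ε/100, let Γ ≥ 12/ℓ, and let G = {0, ℓ, 2ℓ, …, 1−ℓ, 1}². Suppose a : G → [0.45, 0.55] satisfies |a(p) − h(p)| ≤ ℓ²/100 for all p ∈ G, and g : G → [−0.01, 0.01]² satisfies ‖2g(p) − ∇h(p)‖_∞ ≤ ℓ/100 for all p ∈ G. Let δ' ≤ ℓ²/100 and let f : [0,1]² → ℝ be any function of the form f(x) = max_{p ∈ G} M(x; p, A^p, g(p)), where for each p ∈ G, A^p = (a_c^p, a_r^p, a_t^p, a_l^p, a_b^p) with |a_i^p − a(p)| ≤ δ' for all i ∈ {c, r, t, l, b}. Then for any x ∈ [0,1]² at which f is differentiable and any j ∈ {1,2}: if x_j > 0 and ∂h/∂x_j(x) > ε then ∂f/∂x_j(x) > ε/3, and if x_j < 1 and ∂h/∂x_j(x)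 < −ε then ∂f/∂x_j(x) < −ε/3. -/

import Mathlib

noncomputable section

/-- The central affine piece of a mesa. -/
def Pc (p : ℝ × ℝ) (a : ℝ) (g : ℝ × ℝ) (x : ℝ × ℝ) : ℝ :=
  (x.1 - p.1) * g.1 + (x.2 - p.2) * g.2 + a

/-- The right affine piece of a mesa. -/
def Pr (ℓ Γ : ℝ) (p : ℝ × ℝ) (a : ℝ) (g : ℝ × ℝ) (x : ℝ × ℝ) : ℝ :=
  (x.1 - p.1) * (-Γ + g.1) + (x.2 - p.2) * g.2 + a + Γ * ℓ / 2

/-- The top affine piece of a mesa. -/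
def Pt (ℓ Γ : ℝ) (p : ℝ × ℝ) (a : ℝ) (g : ℝ × ℝ) (x : ℝ × ℝ) : ℝ :=
  (x.1 - p.1) * g.1 + (x.2 - p.2) * (-Γ + g.2) + a + Γ * ℓ / 2

/-- The left affine piece of a mesa. -/
def Pl (ℓ Γ : ℝ) (p : ℝ × ℝ) (a : ℝ) (g : ℝ × ℝ) (x : ℝ × ℝ) : ℝ :=
  (x.1 - p.1) * (Γ + g.1) + (x.2 - p.2) * g.2 + a + Γ * ℓ / 2

/-- The bottom affine piece of a mesa. -/
def Pb (ℓ Γ : ℝ) (p : ℝ × ℝ) (a : ℝ) (g : ℝ × ℝ) (x : ℝ × ℝ) : ℝ :=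
  (x.1 - p.1) * g.1 + (x.2 - p.2) * (Γ + g.2) + a + Γ * ℓ / 2

/-- The mesa function with center `p`, values `A` (indexed `0 = c, 1 = r, 2 = t, 3 = l, 4 = b`)
and gradient `g`: the minimum of the five affine pieces. -/
def mesa (ℓ Γ : ℝ) (p : ℝ × ℝ) (A : Fin 5 → ℝ) (g : ℝ × ℝ) (x : ℝ × ℝ) : ℝ :=
  min (Pc p (A 0) g x)
    (min (Pr ℓ Γ p (A 1) g x) (min (Pt ℓ Γ p (A 2) g x) (min (Pl ℓ Γ p (A 3) g x) (Pb ℓ Γ p (A 4) g x))))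

/-- The index set of the grid `{0, ℓ, 2ℓ, …, 1}²` where `ℓ = 1/N`. -/
def grid (N : ℕ) : Finset (ℕ × ℕ) := Finset.range (N + 1) ×ˢ Finset.range (N + 1)

/-- The grid point corresponding to an index pair. -/
def pt (ℓ : ℝ) (k : ℕ × ℕ) : ℝ × ℝ := ((k.1 : ℝ) * ℓ, (k.2 : ℝ) * ℓ)

theorem grid_nonempty (N : ℕ) : (grid N).Nonempty :=
  ⟨(0, 0), by simp [grid]⟩

/-- The unit square `[0,1]²` in `ℝ × ℝ`. -/
def unitSq : Set (ℝ × ℝ) := {x | x.1 ∈ Set.Icc (0 : ℝ) 1 ∧ x.2 ∈ Set.Icc (0 : ℝ) 1}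

/-- The continuous linear functional `w ↦ ⟨v, w⟩` on `ℝ × ℝ` given by a gradient vector `v`. -/
def gradCLM (v : ℝ × ℝ) : ℝ × ℝ →L[ℝ] ℝ :=
  v.1 • (ContinuousLinearMap.fst ℝ ℝ ℝ) + v.2 • (ContinuousLinearMap.snd ℝ ℝ ℝ)

-- helper lemmas
lemma gradCLM_apply (v w : ℝ × ℝ) : gradCLM v w = v.1 * w.1 + v.2 * w.2 := by
  simp [gradCLM]

lemma norm_pair (a b : ℝ) : ‖((a, b) : ℝ × ℝ)‖ = max |a| |b| := by
  simp [Prod.norm_def, Real.norm_eq_abs]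

lemma abs_fst_le (v : ℝ × ℝ) : |v.1| ≤ ‖v‖ := by
  rw [Prod.norm_def]; exact le_max_of_le_left (le_of_eq (Real.norm_eq_abs _).symm)

lemma abs_snd_le (v : ℝ × ℝ) : |v.2| ≤ ‖v‖ := by
  rw [Prod.norm_def]; exact le_max_of_le_right (le_of_eq (Real.norm_eq_abs _).symm)

lemma gradCLM_norm_le (v : ℝ × ℝ) : ‖gradCLM v‖ ≤ |v.1| + |v.2| := by
  apply ContinuousLinearMap.opNorm_le_bound _ (by positivity)
  intro w
  rw [gradCLM_apply, Real.norm_eq_abs]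
  calc |v.1 * w.1 + v.2 * w.2| ≤ |v.1 * w.1| + |v.2 * w.2| := abs_add_le _ _
    _ = |v.1| * |w.1| + |v.2| * |w.2| := by rw [abs_mul, abs_mul]
    _ ≤ |v.1| * ‖w‖ + |v.2| * ‖w‖ := by
        gcongr
        · exact abs_fst_le w
        · exact abs_snd_le w
    _ = (|v.1| + |v.2|) * ‖w‖ := by ring

lemma gradCLM_sub (v w : ℝ × ℝ) : gradCLM v - gradCLM w = gradCLM (v - w) := by
  refine ContinuousLinearMap.ext fun z => ?_
  simp [gradCLM_apply]
  ring

lemma convex_unitSq : Convex ℝ unitSq := by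
  intro z hz w hw α β hα hβ hαβ
  have h1 := (convex_Icc (0:ℝ) 1) hz.1 hw.1 hα hβ hαβ
  have h2 := (convex_Icc (0:ℝ) 1) hz.2 hw.2 hα hβ hαβ
  exact ⟨by simpa using h1, by simpa using h2⟩

lemma fderiv_dir_ge (f : ℝ × ℝ → ℝ) (x v : ℝ × ℝ) (hd : DifferentiableAt ℝ f x)
    (c τ0 : ℝ) (hτ0 : 0 < τ0)
    (hle : ∀ τ : ℝ, 0 ≤ τ → τ ≤ τ0 → f x + c * τ ≤ f (x + τ • v)) :
    c ≤ fderiv ℝ f x v := by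
  have h1 : HasDerivAt (fun τ : ℝ => x + τ • v) v 0 := by
    simpa using ((hasDerivAt_id (0:ℝ)).smul_const v).const_add x
  have hF : HasFDerivAt f (fderiv ℝ f x) (x + (0:ℝ) • v) := by simpa using hd.hasFDerivAt
  have hφ : HasDerivAt (fun τ : ℝ => f (x + τ • v)) (fderiv ℝ f x v) 0 := by
    have := hF.comp_hasDerivAt 0 h1
    exact this
  have htend := hasDerivAt_iff_tendsto_slope.1 hφ
  have htend' : Filter.Tendsto (slope (fun τ : ℝ => f (x + τ • v)) 0) (nhdsWithin 0 (Set.Ioi 0))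
      (nhds (fderiv ℝ f x v)) :=
    htend.mono_left (nhdsWithin_mono _ (fun t ht => ne_of_gt ht))
  refine ge_of_tendsto htend' ?_
  filter_upwards [Ioc_mem_nhdsGT_of_mem (Set.mem_Ico.2 ⟨le_refl (0:ℝ), hτ0⟩)] with τ hτ
  obtain ⟨hτpos, hτle⟩ := hτ
  have := hle τ hτpos.le hτle
  rw [slope_def_field]
  have hφ0 : f (x + (0:ℝ) • v) = f x := by simp
  rw [hφ0, sub_zero, le_div_iff₀ hτpos]
  linarith


lemma seg_norm_le (p q x : ℝ × ℝ) (r : ℝ) (hp : ‖p - x‖ ≤ r) (hq : ‖q - x‖ ≤ r) :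
    ∀ u ∈ segment ℝ p q, ‖u - x‖ ≤ r := by
  intro u hu
  obtain ⟨α, β, hα, hβ, hαβ, rfl⟩ := hu
  have heq : α • p + β • q - x = α • (p - x) + β • (q - x) := by
    calc α • p + β • q - x = α • p + β • q - (α + β) • x := by rw [hαβ, one_smul]
      _ = α • (p - x) + β • (q - x) := by module
  rw [heq]
  calc ‖α • (p - x) + β • (q - x)‖ ≤ ‖α • (p - x)‖ + ‖β • (q - x)‖ := norm_add_le _ _
    _ = α * ‖p - x‖ + β * ‖q - x‖ := by
        rw [norm_smul, norm_smul, Real.norm_eq_abs, Real.norm_eq_abs, abs_of_nonneg hα,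
          abs_of_nonneg hβ]
    _ ≤ α * r + β * r := by gcongr
    _ = r := by rw [← add_mul, hαβ, one_mul]

lemma taylor_est (L : ℝ) (hL0 : 0 ≤ L) (h : ℝ × ℝ → ℝ) (h' : ℝ × ℝ → ℝ × ℝ)
    (hderiv : ∀ u ∈ unitSq, HasFDerivWithinAt h (gradCLM (h' u)) unitSq u)
    (hlip : ∀ u ∈ unitSq, ∀ y ∈ unitSq, ‖h' u - h' y‖ ≤ L * ‖u - y‖)
    (x p q : ℝ × ℝ) (hx : x ∈ unitSq) (hp : p ∈ unitSq) (hq : q ∈ unitSq)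
    (r : ℝ) (hpr : ‖p - x‖ ≤ r) (hqr : ‖q - x‖ ≤ r) :
    |h q - h p - ((h' x).1 * (q.1 - p.1) + (h' x).2 * (q.2 - p.2))| ≤ 2 * L * r * ‖q - p‖ := by
  have hsub : segment ℝ p q ⊆ unitSq := convex_unitSq.segment_subset hp hq
  have hbd : ∀ u ∈ segment ℝ p q, ‖gradCLM (h' u) - gradCLM (h' x)‖ ≤ 2 * L * r := by
    intro u hu
    rw [gradCLM_sub]
    calc ‖gradCLM (h' u - h' x)‖ ≤ |(h' u - h' x).1| + |(h' u - h' x).2| := gradCLM_norm_le _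
      _ ≤ ‖h' u - h' x‖ + ‖h' u - h' x‖ := add_le_add (abs_fst_le _) (abs_snd_le _)
      _ = 2 * ‖h' u - h' x‖ := by ring
      _ ≤ 2 * (L * ‖u - x‖) := by gcongr; exact hlip u (hsub hu) x hx
      _ ≤ 2 * (L * r) := by gcongr; exact seg_norm_le p q x r hpr hqr u hu
      _ = 2 * L * r := by ring
  have key := Convex.norm_image_sub_le_of_norm_hasFDerivWithin_le'
    (f := h) (f' := fun u => gradCLM (h' u)) (φ := gradCLM (h' x)) (C := 2 * L * r)
    (s := segment ℝ p q)
    (fun u hu => (hderiv u (hsub hu)).mono hsub) hbd (convex_segment p q)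
    (left_mem_segment ℝ p q) (right_mem_segment ℝ p q)
  rw [gradCLM_apply] at key
  rw [← Real.norm_eq_abs]
  convert key using 3 <;> rfl

lemma core_est (ℓ ε δ' D1 aK aK' G1 G2 G1' G2' w1 w2 : ℝ)
    (hℓ : 0 < ℓ) (hεℓ : ℓ ≤ ε / 100) (hδ'0 : 0 ≤ δ') (hδ' : δ' ≤ ℓ ^ 2 / 100) (hε : 0 < ε)
    (hD : ε < D1)
    (haa : D1 * ℓ - 0.06 * (ℓ * ℓ) ≤ aK' - aK)
    (hG1 : |2 * G1 - D1| ≤ 0.016 * ℓ) (hG1' : |2 * G1' - D1| ≤ 0.026 * ℓ)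
    (hG2 : |G2' - G2| ≤ 0.021 * ℓ)
    (hw1 : |w1| ≤ 0.52 * ℓ) (hw2 : |w2| ≤ 0.52 * ℓ) :
    aK + G1 * w1 + G2 * w2 + 4 * δ' < aK' + G1' * (w1 - ℓ) + G2' * w2 := by
  have a1 := abs_le.1 hG1
  have a2 := abs_le.1 hG1'
  have a3 := abs_le.1 hG2
  have b1 := abs_le.1 hw1
  have b2 := abs_le.1 hw2
  have h1 : |G1' - G1| ≤ 0.021 * ℓ := by
    rw [abs_le]; constructor <;> linarith [a1.1, a1.2, a2.1, a2.2]
  have h2 : |(G1' - G1) * w1| ≤ 0.021 * ℓ * (0.52 * ℓ) :=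
    (abs_mul _ _).le.trans (mul_le_mul h1 hw1 (abs_nonneg _) (by positivity))
  have h3 : |(G2' - G2) * w2| ≤ 0.021 * ℓ * (0.52 * ℓ) :=
    (abs_mul _ _).le.trans (mul_le_mul hG2 hw2 (abs_nonneg _) (by positivity))
  have h2' := abs_le.1 h2
  have h3' := abs_le.1 h3
  have h4 : G1' * ℓ ≤ D1 * ℓ / 2 + 0.013 * (ℓ * ℓ) := by
    have hh := mul_le_mul_of_nonneg_right a2.2 hℓ.le
    nlinarith [hh]
  have h5 : ℓ * ℓ ≤ ℓ * (ε / 100) := mul_le_mul_of_nonneg_left hεℓ hℓ.le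
  have h7 : ε * ℓ ≤ D1 * ℓ := mul_le_mul_of_nonneg_right hD.le hℓ.le
  have h6 : 0 < ε * ℓ := mul_pos hε hℓ
  have hsq : ℓ ^ 2 = ℓ * ℓ := by ring
  have hδℓ : 4 * δ' ≤ 0.04 * (ℓ * ℓ) := by linarith
  have hexp : aK' + G1' * (w1 - ℓ) + G2' * w2 - (aK + G1 * w1 + G2 * w2)
      = (aK' - aK) + ((G1' - G1) * w1) + ((G2' - G2) * w2) - G1' * ℓ := by ring
  have final : 0 < (aK' - aK) + ((G1' - G1) * w1) + ((G2' - G2) * w2) - G1' * ℓ - 4 * δ' := by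
    linarith [h2'.1, h3'.1]
  linarith [hexp, final]


lemma mul_bounds {a b A B : ℝ} (ha : |a| ≤ A) (hb : |b| ≤ B) :
    -(A * B) ≤ a * b ∧ a * b ≤ A * B := by
  have h : |a * b| ≤ A * B := by
    rw [abs_mul]; exact mul_le_mul ha hb (abs_nonneg _) ((abs_nonneg a).trans ha)
  exact abs_le.1 h

lemma norm_sub_pair_le (a b : ℝ) (x : ℝ × ℝ) (c : ℝ)
    (h1 : |a - x.1| ≤ c) (h2 : |b - x.2| ≤ c) : ‖((a, b) : ℝ × ℝ) - x‖ ≤ c := by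
  have he : ((a, b) : ℝ × ℝ) - x = (a - x.1, b - x.2) := rfl
  rw [he, norm_pair]
  exact max_le h1 h2

lemma grad_est {L ℓ r : ℝ} {h' : ℝ × ℝ → ℝ × ℝ} {x q : ℝ × ℝ} {G : ℝ × ℝ}
    (h1 : ‖(2 * G.1, 2 * G.2) - h' q‖ ≤ ℓ / 100)
    (h2 : ‖h' q - h' x‖ ≤ L * ‖q - x‖) (hL : L ≤ 1 / 100)
    (hqx : ‖q - x‖ ≤ r) (hr0 : 0 ≤ r) :
    |2 * G.1 - (h' x).1| ≤ ℓ / 100 + r / 100 ∧ |2 * G.2 - (h' x).2| ≤ ℓ / 100 + r / 100 := by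
  have e1 : |2 * G.1 - (h' q).1| ≤ ℓ / 100 := by
    have := abs_fst_le ((2 * G.1, 2 * G.2) - h' q)
    simp only [Prod.fst_sub] at this
    exact le_trans this h1
  have e1' : |2 * G.2 - (h' q).2| ≤ ℓ / 100 := by
    have := abs_snd_le ((2 * G.1, 2 * G.2) - h' q)
    simp only [Prod.snd_sub] at this
    exact le_trans this h1
  have hLr : L * ‖q - x‖ ≤ r / 100 := by
    calc L * ‖q - x‖ ≤ (1 / 100) * r := by
          rcases le_or_gt L 0 with hL0 | hL0
          · have : L * ‖q - x‖ ≤ 0 := mul_nonpos_of_nonpos_of_nonneg hL0 (norm_nonneg _)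
            linarith
          · exact mul_le_mul hL hqx (norm_nonneg _) (by norm_num)
      _ = r / 100 := by ring
  have e2 : |(h' q).1 - (h' x).1| ≤ r / 100 := by
    have := abs_fst_le (h' q - h' x)
    simp only [Prod.fst_sub] at this
    linarith [le_trans this h2]
  have e2' : |(h' q).2 - (h' x).2| ≤ r / 100 := by
    have := abs_snd_le (h' q - h' x)
    simp only [Prod.snd_sub] at this
    linarith [le_trans this h2]
  constructor
  · have a1 := abs_le.1 e1
    have a2 := abs_le.1 e2
    rw [abs_le]; constructor <;> linarith [a1.1, a1.2, a2.1, a2.2]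
  · have a1 := abs_le.1 e1'
    have a2 := abs_le.1 e2'
    rw [abs_le]; constructor <;> linarith [a1.1, a1.2, a2.1, a2.2]



set_option maxHeartbeats 4000000 in
/-- Violated KKT conditions of the smooth function are preserved by every perturbed mesa
maximum.  Here `h' : ℝ × ℝ → ℝ × ℝ` is the gradient of `h` on the unit square,
`fderiv ℝ f x (1,0)` and `fderiv ℝ f x (0,1)` are the partial derivatives of `f` at `x`,
and the norm on `ℝ × ℝ` is the sup-norm. -/
theorem perturbed_mesa_preserves_violated_KKT
    (L : ℝ) (hL : L ≤ 1 / 100)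
    (h : ℝ × ℝ → ℝ) (h' : ℝ × ℝ → ℝ × ℝ)
    (hderiv : ∀ x ∈ unitSq, HasFDerivWithinAt h (gradCLM (h' x)) unitSq x)
    (hlip : ∀ x ∈ unitSq, ∀ y ∈ unitSq, ‖h' x - h' y‖ ≤ L * ‖x - y‖)
    (hval : ∀ x ∈ unitSq, h x ∈ Set.Icc (0.49 : ℝ) 0.51)
    (hgrad : ∀ x ∈ unitSq,
      (h' x).1 ∈ Set.Icc (-0.001 : ℝ) 0.001 ∧ (h' x).2 ∈ Set.Icc (-0.001 : ℝ) 0.001)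
    (ε : ℝ) (hε : 0 < ε)
    (N : ℕ) (hN : 0 < N) (ℓ : ℝ) (hℓ : ℓ = 1 / N) (hℓε : ℓ ≤ ε / 100)
    (Γ : ℝ) (hΓ : 12 / ℓ ≤ Γ)
    (a : ℕ × ℕ → ℝ)
    (ha : ∀ k ∈ grid N, a k ∈ Set.Icc (0.45 : ℝ) 0.55 ∧ |a k - h (pt ℓ k)| ≤ ℓ ^ 2 / 100)
    (g : ℕ × ℕ → ℝ × ℝ)
    (hg : ∀ k ∈ grid N,
      ((g k).1 ∈ Set.Icc (-0.01 : ℝ) 0.01 ∧ (g k).2 ∈ Set.Icc (-0.01 : ℝ) 0.01) ∧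
      ‖(2 * (g k).1, 2 * (g k).2) - h' (pt ℓ k)‖ ≤ ℓ / 100)
    (δ' : ℝ) (hδ' : δ' ≤ ℓ ^ 2 / 100)
    (A : ℕ × ℕ → Fin 5 → ℝ) (hA : ∀ k ∈ grid N, ∀ i, |A k i - a k| ≤ δ')
    (f : ℝ × ℝ → ℝ)
    (hf : ∀ x, f x = (grid N).sup' (grid_nonempty N) fun k => mesa ℓ Γ (pt ℓ k) (A k) (g k) x)
    (x : ℝ × ℝ) (hx : x ∈ unitSq) (hdiff : DifferentiableAt ℝ f x) :
    (0 < x.1 → ε < (h' x).1 → ε / 3 < fderiv ℝ f x (1, 0)) ∧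
    (x.1 < 1 → (h' x).1 < -ε → fderiv ℝ f x (1, 0) < -(ε / 3)) ∧
    (0 < x.2 → ε < (h' x).2 → ε / 3 < fderiv ℝ f x (0, 1)) ∧
    (x.2 < 1 → (h' x).2 < -ε → fderiv ℝ f x (0, 1) < -(ε / 3)) := by
  have hNpos : (0 : ℝ) < N := by exact_mod_cast hN
  have hℓpos : 0 < ℓ := by rw [hℓ]; positivity
  have hℓN : ℓ * N = 1 := by rw [hℓ]; field_simp
  have hN1 : (1 : ℝ) ≤ N := by exact_mod_cast hN
  have hℓ1 : ℓ ≤ 1 := by rw [hℓ, div_le_one hNpos]; exact hN1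
  have hΓpos : 0 < Γ := lt_of_lt_of_le (by positivity) hΓ
  have hΓℓ : 12 ≤ Γ * ℓ := by
    rw [div_le_iff₀ hℓpos] at hΓ; linarith
  have hL0 : 0 ≤ L := by
    have h00 : ((0, 0) : ℝ × ℝ) ∈ unitSq := by
      refine ⟨⟨le_refl _, ?_⟩, ⟨le_refl _, ?_⟩⟩ <;> norm_num
    have h11 : ((1, 1) : ℝ × ℝ) ∈ unitSq := by
      refine ⟨⟨?_, le_refl _⟩, ⟨?_, le_refl _⟩⟩ <;> norm_num
    have hll := hlip (0, 0) h00 (1, 1) h11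
    have hn : ‖((0, 0) : ℝ × ℝ) - (1, 1)‖ = 1 := by
      have he : ((0, 0) : ℝ × ℝ) - (1, 1) = ((-1 : ℝ), (-1 : ℝ)) :=
        Prod.ext_iff.2 ⟨by norm_num, by norm_num⟩
      rw [he, norm_pair]; norm_num
    rw [hn, mul_one] at hll
    exact le_trans (norm_nonneg _) hll
  have hδ'0 : 0 ≤ δ' := le_trans (abs_nonneg _) (hA (0, 0) (by simp [grid]) 0)
  have hℓsq1 : ℓ ^ 2 ≤ 1 := by nlinarith [hℓ1, hℓpos]
  have hδ01 : δ' ≤ 0.01 := by linarith only [hδ', hℓsq1]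
  have hptmem : ∀ k ∈ grid N, pt ℓ k ∈ unitSq := by
    intro k hk
    simp only [grid, Finset.mem_product, Finset.mem_range, Nat.lt_succ_iff] at hk
    have h1 : (k.1 : ℝ) ≤ N := by exact_mod_cast hk.1
    have h2 : (k.2 : ℝ) ≤ N := by exact_mod_cast hk.2
    refine ⟨⟨mul_nonneg (Nat.cast_nonneg _) hℓpos.le, ?_⟩,
      ⟨mul_nonneg (Nat.cast_nonneg _) hℓpos.le, ?_⟩⟩
    · calc (k.1 : ℝ) * ℓ ≤ N * ℓ := mul_le_mul_of_nonneg_right h1 hℓpos.le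
        _ = 1 := by rw [mul_comm]; exact hℓN
    · calc (k.2 : ℝ) * ℓ ≤ N * ℓ := mul_le_mul_of_nonneg_right h2 hℓpos.le
        _ = 1 := by rw [mul_comm]; exact hℓN
  obtain ⟨⟨hx10, hx11⟩, hx20, hx21⟩ := hx
  have hx' : x ∈ unitSq := ⟨⟨hx10, hx11⟩, hx20, hx21⟩
  -- lower bound on f x via the nearest grid point
  have hflb : (0.43 : ℝ) ≤ f x := by
    have hxe1 : x.1 * N * ℓ = x.1 := by
      rw [mul_assoc, mul_comm (N : ℝ) ℓ, hℓN, mul_one]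
    have hxe2 : x.2 * N * ℓ = x.2 := by
      rw [mul_assoc, mul_comm (N : ℝ) ℓ, hℓN, mul_one]
    have hnn1 : (0 : ℝ) ≤ x.1 * N + 1 / 2 := by
      linarith only [mul_nonneg hx10 hNpos.le]
    have hnn2 : (0 : ℝ) ≤ x.2 * N + 1 / 2 := by
      linarith only [mul_nonneg hx20 hNpos.le]
    obtain ⟨k0, hk0mem, hd1, hd2⟩ : ∃ k0 ∈ grid N,
        |x.1 - (k0.1 : ℝ) * ℓ| ≤ ℓ / 2 ∧ |x.2 - (k0.2 : ℝ) * ℓ| ≤ ℓ / 2 := by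
      refine ⟨(⌊x.1 * N + 1 / 2⌋₊, ⌊x.2 * N + 1 / 2⌋₊), ?_, ?_, ?_⟩
      · simp only [grid, Finset.mem_product, Finset.mem_range]
        constructor
        · rw [Nat.floor_lt hnn1]
          push_cast
          linarith only [mul_le_mul_of_nonneg_right hx11 hNpos.le, hNpos]
        · rw [Nat.floor_lt hnn2]
          push_cast
          linarith only [mul_le_mul_of_nonneg_right hx21 hNpos.le, hNpos]
      · dsimp only
        have hfl : ((⌊x.1 * N + 1 / 2⌋₊ : ℕ) : ℝ) ≤ x.1 * N + 1 / 2 := Nat.floor_le hnn1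
        have hfu : x.1 * N + 1 / 2 < (⌊x.1 * N + 1 / 2⌋₊ : ℕ) + 1 := Nat.lt_floor_add_one _
        have e1 := mul_le_mul_of_nonneg_right hfl hℓpos.le
        have e2 := mul_le_mul_of_nonneg_right hfu.le hℓpos.le
        rw [abs_le]
        constructor <;> [linarith only [e1, hxe1, hℓpos]; linarith only [e2, hxe1, hℓpos]]
      · dsimp only
        have hfl : ((⌊x.2 * N + 1 / 2⌋₊ : ℕ) : ℝ) ≤ x.2 * N + 1 / 2 := Nat.floor_le hnn2
        have hfu : x.2 * N + 1 / 2 < (⌊x.2 * N + 1 / 2⌋₊ : ℕ) + 1 := Nat.lt_floor_add_one _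
        have e1 := mul_le_mul_of_nonneg_right hfl hℓpos.le
        have e2 := mul_le_mul_of_nonneg_right hfu.le hℓpos.le
        rw [abs_le]
        constructor <;> [linarith only [e1, hxe2, hℓpos]; linarith only [e2, hxe2, hℓpos]]
    have hgk0 := hg k0 hk0mem
    have hak0 := ha k0 hk0mem
    have hAk0 := hA k0 hk0mem
    have hg1 : |(g k0).1| ≤ 0.01 := abs_le.2 ⟨hgk0.1.1.1, hgk0.1.1.2⟩
    have hg2 : |(g k0).2| ≤ 0.01 := abs_le.2 ⟨hgk0.1.2.1, hgk0.1.2.2⟩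
    have hm1 := mul_bounds hd1 hg1
    have hm2 := mul_bounds hd2 hg2
    have habs1 := abs_le.1 hd1
    have habs2 := abs_le.1 hd2
    have hΓ1 : 0 ≤ Γ * (ℓ / 2 - (x.1 - (k0.1 : ℝ) * ℓ)) :=
      mul_nonneg hΓpos.le (by linarith [habs1.2])
    have hΓ2 : 0 ≤ Γ * (ℓ / 2 + (x.1 - (k0.1 : ℝ) * ℓ)) :=
      mul_nonneg hΓpos.le (by linarith [habs1.1])
    have hΓ3 : 0 ≤ Γ * (ℓ / 2 - (x.2 - (k0.2 : ℝ) * ℓ)) :=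
      mul_nonneg hΓpos.le (by linarith [habs2.2])
    have hΓ4 : 0 ≤ Γ * (ℓ / 2 + (x.2 - (k0.2 : ℝ) * ℓ)) :=
      mul_nonneg hΓpos.le (by linarith [habs2.1])
    have hA0 := abs_le.1 (hAk0 0)
    have hA1 := abs_le.1 (hAk0 1)
    have hA2 := abs_le.1 (hAk0 2)
    have hA3 := abs_le.1 (hAk0 3)
    have hA4 := abs_le.1 (hAk0 4)
    have hmesa : (0.43 : ℝ) ≤ mesa ℓ Γ (pt ℓ k0) (A k0) (g k0) x := by
      simp only [mesa, Pc, Pr, Pt, Pl, Pb, pt]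
      refine le_min ?_ (le_min ?_ (le_min ?_ (le_min ?_ ?_)))
      · linarith only [hm1.1, hm2.1, hA0.1, hak0.1.1, hδ01, hℓ1, hℓpos]
      · linarith only [hm1.1, hm2.1, hA1.1, hak0.1.1, hδ01, hℓ1, hℓpos, hΓ1]
      · linarith only [hm1.1, hm2.1, hA2.1, hak0.1.1, hδ01, hℓ1, hℓpos, hΓ3]
      · linarith only [hm1.1, hm2.1, hA3.1, hak0.1.1, hδ01, hℓ1, hℓpos, hΓ2]
      · linarith only [hm1.1, hm2.1, hA4.1, hak0.1.1, hδ01, hℓ1, hℓpos, hΓ4]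
    rw [hf x]
    exact le_trans hmesa
      (Finset.le_sup' (fun k => mesa ℓ Γ (pt ℓ k) (A k) (g k) x) hk0mem)
  -- the active mesa
  obtain ⟨k, hk, hsup_eq⟩ := Finset.exists_mem_eq_sup' (grid_nonempty N)
    (fun k => mesa ℓ Γ (pt ℓ k) (A k) (g k) x)
  have hfk : f x = mesa ℓ Γ (pt ℓ k) (A k) (g k) x := by rw [hf x, hsup_eq]
  have hgk := hg k hk
  have hak := ha k hk
  have hAk := hA k hk
  have hg1 : |(g k).1| ≤ 0.01 := abs_le.2 ⟨hgk.1.1.1, hgk.1.1.2⟩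
  have hg2 : |(g k).2| ≤ 0.01 := abs_le.2 ⟨hgk.1.2.1, hgk.1.2.2⟩
  have hA0 := abs_le.1 (hAk 0)
  have hA1 := abs_le.1 (hAk 1)
  have hA2 := abs_le.1 (hAk 2)
  have hA3 := abs_le.1 (hAk 3)
  have hA4 := abs_le.1 (hAk 4)
  have hkpt1 : 0 ≤ (k.1 : ℝ) * ℓ ∧ (k.1 : ℝ) * ℓ ≤ 1 := ⟨(hptmem k hk).1.1, (hptmem k hk).1.2⟩
  have hkpt2 : 0 ≤ (k.2 : ℝ) * ℓ ∧ (k.2 : ℝ) * ℓ ≤ 1 := ⟨(hptmem k hk).2.1, (hptmem k hk).2.2⟩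
  have habs_t : |x.1 - (k.1 : ℝ) * ℓ| ≤ 1 := abs_le.2 ⟨by linarith [hkpt1.2], by linarith [hkpt1.1]⟩
  have habs_s : |x.2 - (k.2 : ℝ) * ℓ| ≤ 1 := abs_le.2 ⟨by linarith [hkpt2.2], by linarith [hkpt2.1]⟩
  have hmt1 := mul_bounds habs_t hg1
  have hms2 := mul_bounds habs_s hg2
  -- the five piece upper bounds on f x (in scalar form)
  have hPc : f x ≤ (x.1 - (k.1 : ℝ) * ℓ) * (g k).1 + (x.2 - (k.2 : ℝ) * ℓ) * (g k).2 + A k 0 := by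
    have h5 : mesa ℓ Γ (pt ℓ k) (A k) (g k) x ≤ Pc (pt ℓ k) (A k 0) (g k) x := by
      simp only [mesa]; exact min_le_left _ _
    rw [hfk]
    simpa [Pc, pt] using h5
  have hPr : f x ≤ (x.1 - (k.1 : ℝ) * ℓ) * (-Γ + (g k).1) + (x.2 - (k.2 : ℝ) * ℓ) * (g k).2
      + A k 1 + Γ * ℓ / 2 := by
    have h5 : mesa ℓ Γ (pt ℓ k) (A k) (g k) x ≤ Pr ℓ Γ (pt ℓ k) (A k 1) (g k) x := by
      simp only [mesa]; exact le_trans (min_le_right _ _) (min_le_left _ _)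
    rw [hfk]
    simpa [Pr, pt] using h5
  have hPt : f x ≤ (x.1 - (k.1 : ℝ) * ℓ) * (g k).1 + (x.2 - (k.2 : ℝ) * ℓ) * (-Γ + (g k).2)
      + A k 2 + Γ * ℓ / 2 := by
    have h5 : mesa ℓ Γ (pt ℓ k) (A k) (g k) x ≤ Pt ℓ Γ (pt ℓ k) (A k 2) (g k) x := by
      simp only [mesa]
      exact le_trans (min_le_right _ _) (le_trans (min_le_right _ _) (min_le_left _ _))
    rw [hfk]
    simpa [Pt, pt] using h5
  have hPl : f x ≤ (x.1 - (k.1 : ℝ) * ℓ) * (Γ + (g k).1) + (x.2 - (k.2 : ℝ) * ℓ) * (g k).2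
      + A k 3 + Γ * ℓ / 2 := by
    have h5 : mesa ℓ Γ (pt ℓ k) (A k) (g k) x ≤ Pl ℓ Γ (pt ℓ k) (A k 3) (g k) x := by
      simp only [mesa]
      exact le_trans (min_le_right _ _) (le_trans (min_le_right _ _)
        (le_trans (min_le_right _ _) (min_le_left _ _)))
    rw [hfk]
    simpa [Pl, pt] using h5
  have hPb : f x ≤ (x.1 - (k.1 : ℝ) * ℓ) * (g k).1 + (x.2 - (k.2 : ℝ) * ℓ) * (Γ + (g k).2)
      + A k 4 + Γ * ℓ / 2 := by
    have h5 : mesa ℓ Γ (pt ℓ k) (A k) (g k) x ≤ Pb ℓ Γ (pt ℓ k) (A k 4) (g k) x := by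
      simp only [mesa]
      exact le_trans (min_le_right _ _) (le_trans (min_le_right _ _)
        (le_trans (min_le_right _ _) (min_le_right _ _)))
    rw [hfk]
    simpa [Pb, pt] using h5
  -- bounds on the offsets
  have htu : x.1 - (k.1 : ℝ) * ℓ ≤ 0.52 * ℓ := by
    by_contra hcc
    push_neg at hcc
    have hh := mul_lt_mul_of_pos_left hcc hΓpos
    linarith only [hh, hPr, hflb, hmt1.2, hms2.2, hA1.2, hak.1.2, hδ01, hΓℓ]
  have htl : -(0.52 * ℓ) ≤ x.1 - (k.1 : ℝ) * ℓ := by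
    by_contra hcc
    push_neg at hcc
    have hh := mul_lt_mul_of_pos_left hcc hΓpos
    linarith only [hh, hPl, hflb, hmt1.2, hms2.2, hA3.2, hak.1.2, hδ01, hΓℓ]
  have hsu : x.2 - (k.2 : ℝ) * ℓ ≤ 0.52 * ℓ := by
    by_contra hcc
    push_neg at hcc
    have hh := mul_lt_mul_of_pos_left hcc hΓpos
    linarith only [hh, hPt, hflb, hmt1.2, hms2.2, hA2.2, hak.1.2, hδ01, hΓℓ]
  have hsl : -(0.52 * ℓ) ≤ x.2 - (k.2 : ℝ) * ℓ := by
    by_contra hcc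
    push_neg at hcc
    have hh := mul_lt_mul_of_pos_left hcc hΓpos
    linarith only [hh, hPb, hflb, hmt1.2, hms2.2, hA4.2, hak.1.2, hδ01, hΓℓ]
  have habs_t52 : |x.1 - (k.1 : ℝ) * ℓ| ≤ 0.52 * ℓ := abs_le.2 ⟨htl, htu⟩
  have habs_s52 : |x.2 - (k.2 : ℝ) * ℓ| ≤ 0.52 * ℓ := abs_le.2 ⟨hsl, hsu⟩
  have hfub : f x ≤ 0.58 := by
    linarith only [hPc, hmt1.2, hms2.2, hA0.2, hak.1.2, hδ01]
  -- gradient estimate at k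
  have hnormk : ‖pt ℓ k - x‖ ≤ 0.52 * ℓ := by
    refine norm_sub_pair_le _ _ _ _ ?_ ?_
    · rw [abs_sub_comm]; exact habs_t52
    · rw [abs_sub_comm]; exact habs_s52
  have hgek := grad_est hgk.2 (hlip (pt ℓ k) (hptmem k hk) x hx') hL hnormk (by positivity)
  have hG1k : |2 * (g k).1 - (h' x).1| ≤ 0.016 * ℓ :=
    le_trans hgek.1 (by linarith)
  have hG2k : |2 * (g k).2 - (h' x).2| ≤ 0.016 * ℓ :=
    le_trans hgek.2 (by linarith)
  refine ⟨?_, ?_, ?_, ?_⟩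
  · -- Block 1+ : 0 < x.1, ε < (h' x).1
    intro hx1pos hD
    have hkc := hk
    simp only [grid, Finset.mem_product, Finset.mem_range, Nat.lt_succ_iff] at hkc
    have hstrict : (x.1 - (k.1 : ℝ) * ℓ) * (g k).1 + (x.2 - (k.2 : ℝ) * ℓ) * (g k).2 + A k 0
        < (x.1 - (k.1 : ℝ) * ℓ) * (-Γ + (g k).1) + (x.2 - (k.2 : ℝ) * ℓ) * (g k).2
          + A k 1 + Γ * ℓ / 2 := by
      by_contra hcon
      push_neg at hcon
      have hΓt : -(2 * δ') ≤ Γ * (x.1 - (k.1 : ℝ) * ℓ) - Γ * ℓ / 2 := by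
        linarith only [hcon, hA0.1, hA0.2, hA1.1, hA1.2]
      have hΓδ : 2 * δ' ≤ Γ * (0.01 * ℓ) := by
        linarith only [hδ01, hΓℓ]
      have ht49 : 0.49 * ℓ ≤ x.1 - (k.1 : ℝ) * ℓ := by
        by_contra hcc2
        push_neg at hcc2
        have hh2 := mul_lt_mul_of_pos_left hcc2 hΓpos
        linarith only [hh2, hΓt, hΓδ, hΓℓ]
      have hk1N : k.1 < N := by
        by_contra hNN
        push_neg at hNN
        have hk1e : k.1 = N := le_antisymm hkc.1 hNN
        have hk1eq : ((k.1 : ℕ) : ℝ) * ℓ = 1 := by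
          rw [hk1e, mul_comm]; exact hℓN
        linarith only [ht49, hx11, hℓpos, hk1eq]
      have hk'mem : ((k.1 + 1, k.2) : ℕ × ℕ) ∈ grid N := by
        simp only [grid, Finset.mem_product, Finset.mem_range, Nat.lt_succ_iff]
        exact ⟨hk1N, hkc.2⟩
      have hp'1 : (((k.1 + 1 : ℕ)) : ℝ) * ℓ = (k.1 : ℝ) * ℓ + ℓ := by push_cast; ring
      have hnormk' : ‖pt ℓ (k.1 + 1, k.2) - x‖ ≤ 1.52 * ℓ := by
        refine norm_sub_pair_le _ _ _ _ ?_ ?_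
        · rw [hp'1, abs_le]
          constructor <;> linarith only [htu, htl, hℓpos]
        · rw [abs_sub_comm]
          exact le_trans habs_s52 (by linarith only [hℓpos])
      have hnormk152 : ‖pt ℓ k - x‖ ≤ 1.52 * ℓ := le_trans hnormk (by linarith only [hℓpos])
      have hgk' := hg (k.1 + 1, k.2) hk'mem
      have hgek' := grad_est hgk'.2 (hlip (pt ℓ (k.1 + 1, k.2)) (hptmem _ hk'mem) x hx')
        hL hnormk' (by linarith only [hℓpos])
      have hG1k' : |2 * (g (k.1 + 1, k.2)).1 - (h' x).1| ≤ 0.026 * ℓ :=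
        le_trans hgek'.1 (by linarith only [hℓpos])
      have hG2k' : |2 * (g (k.1 + 1, k.2)).2 - (h' x).2| ≤ 0.026 * ℓ :=
        le_trans hgek'.2 (by linarith only [hℓpos])
      have hG2diff : |(g (k.1 + 1, k.2)).2 - (g k).2| ≤ 0.021 * ℓ := by
        have b1 := abs_le.1 hG2k
        have b2 := abs_le.1 hG2k'
        rw [abs_le]; constructor <;> linarith only [b1.1, b1.2, b2.1, b2.2]
      have hpp' : pt ℓ (k.1 + 1, k.2) - pt ℓ k = (ℓ, 0) := by
        have he : pt ℓ (k.1 + 1, k.2) - pt ℓ k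
            = ((((k.1 + 1 : ℕ)) : ℝ) * ℓ - (k.1 : ℝ) * ℓ, ((k.2 : ℕ) : ℝ) * ℓ - (k.2 : ℝ) * ℓ) := rfl
        rw [he, hp'1]
        refine Prod.ext_iff.2 ⟨by dsimp; ring, by dsimp; ring⟩
      have hnormpp' : ‖pt ℓ (k.1 + 1, k.2) - pt ℓ k‖ = ℓ := by
        rw [hpp', norm_pair, abs_of_nonneg hℓpos.le, abs_zero]
        exact max_eq_left hℓpos.le
      have htay := taylor_est L hL0 h h' hderiv hlip x (pt ℓ k) (pt ℓ (k.1 + 1, k.2)) hx'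
        (hptmem k hk) (hptmem _ hk'mem) (1.52 * ℓ) hnormk152 hnormk'
      rw [hnormpp'] at htay
      have hq1 : (pt ℓ (k.1 + 1, k.2)).1 - (pt ℓ k).1 = ℓ := by
        show (((k.1 + 1 : ℕ)) : ℝ) * ℓ - (k.1 : ℝ) * ℓ = ℓ
        rw [hp'1]; ring
      have hq2 : (pt ℓ (k.1 + 1, k.2)).2 - (pt ℓ k).2 = 0 := by
        show ((k.2 : ℕ) : ℝ) * ℓ - (k.2 : ℝ) * ℓ = 0
        ring
      rw [hq1, hq2] at htay
      simp only [mul_zero, add_zero] at htay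
      have hrhs : 2 * L * (1.52 * ℓ) * ℓ ≤ 0.0304 * (ℓ * ℓ) := by
        have hprod : (0 : ℝ) ≤ (1 / 100 - L) * (ℓ * ℓ) :=
          mul_nonneg (by linarith only [hL]) (mul_nonneg hℓpos.le hℓpos.le)
        linarith only [hprod]
      have htay2 : |h (pt ℓ (k.1 + 1, k.2)) - h (pt ℓ k) - (h' x).1 * ℓ| ≤ 0.0304 * (ℓ * ℓ) :=
        le_trans htay hrhs
      have hsq : ℓ ^ 2 = ℓ * ℓ := by ring
      have e1 := abs_le.1 htay2
      have e2 := abs_le.1 hak.2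
      have e3 := abs_le.1 (ha (k.1 + 1, k.2) hk'mem).2
      have haa : (h' x).1 * ℓ - 0.06 * (ℓ * ℓ) ≤ a (k.1 + 1, k.2) - a k := by
        linarith only [e1.1, e2.1, e2.2, e3.1, e3.2, hsq, mul_nonneg hℓpos.le hℓpos.le]
      have hcore := core_est ℓ ε δ' ((h' x).1) (a k) (a (k.1 + 1, k.2)) (g k).1 (g k).2
        (g (k.1 + 1, k.2)).1 (g (k.1 + 1, k.2)).2 (x.1 - (k.1 : ℝ) * ℓ) (x.2 - (k.2 : ℝ) * ℓ)
        hℓpos hℓε hδ'0 hδ' hε hD haa hG1k hG1k' hG2diff habs_t52 habs_s52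
      have hak' := ha (k.1 + 1, k.2) hk'mem
      have hAk' := hA (k.1 + 1, k.2) hk'mem
      have hA'0 := abs_le.1 (hAk' 0)
      have hA'1 := abs_le.1 (hAk' 1)
      have hA'2 := abs_le.1 (hAk' 2)
      have hA'3 := abs_le.1 (hAk' 3)
      have hA'4 := abs_le.1 (hAk' 4)
      have hg1' : |(g (k.1 + 1, k.2)).1| ≤ 0.01 := abs_le.2 ⟨hgk'.1.1.1, hgk'.1.1.2⟩
      have hg2' : |(g (k.1 + 1, k.2)).2| ≤ 0.01 := abs_le.2 ⟨hgk'.1.2.1, hgk'.1.2.2⟩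
      have habs_t' : |x.1 - ((k.1 : ℝ) * ℓ + ℓ)| ≤ 2 := by
        rw [abs_le]
        constructor <;> linarith only [htu, htl, hℓpos, hℓ1]
      have hmt1' := mul_bounds habs_t' hg1'
      have hms2' := mul_bounds habs_s hg2'
      have hbig : Γ * (x.1 - (k.1 : ℝ) * ℓ) ≤ 0.52 * (Γ * ℓ) := by
        have hh3 := mul_le_mul_of_nonneg_left htu hΓpos.le
        linarith only [hh3]
      have hcontra : f x < mesa ℓ Γ (pt ℓ (k.1 + 1, k.2)) (A (k.1 + 1, k.2)) (g (k.1 + 1, k.2)) x := by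
        simp only [mesa, Pc, Pr, Pt, Pl, Pb, pt]
        push_cast
        refine lt_min ?_ (lt_min ?_ (lt_min ?_ (lt_min ?_ ?_)))
        · linarith only [hcore, hA'0.1, hA0.2, hPc, hδ'0]
        · linarith only [hbig, hΓℓ, hmt1'.1, hms2'.1, hA'1.1, hak'.1.1, hδ01, hfub]
        · linarith only [hcore, hPt, hA2.2, hA'2.1, hδ'0]
        · linarith only [hcore, hΓt, hPc, hA0.2, hA'3.1, hδ'0]
        · linarith only [hcore, hPb, hA4.2, hA'4.1, hδ'0]
      have hle' : mesa ℓ Γ (pt ℓ (k.1 + 1, k.2)) (A (k.1 + 1, k.2)) (g (k.1 + 1, k.2)) x ≤ f x := by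
        rw [hf x]
        exact Finset.le_sup' (fun k => mesa ℓ Γ (pt ℓ k) (A k) (g k) x) hk'mem
      linarith only [hcontra, hle']
    -- derivative bound from the active mesa
    have hgap : 0 < (x.1 - (k.1 : ℝ) * ℓ) * (-Γ + (g k).1) + (x.2 - (k.2 : ℝ) * ℓ) * (g k).2
        + A k 1 + Γ * ℓ / 2 - f x := by
      linarith only [hPc, hstrict]
    have hder : (g k).1 ≤ fderiv ℝ f x (1, 0) := by
      refine fderiv_dir_ge f x (1, 0) hdiff _ _ (div_pos hgap hΓpos) ?_
      intro τ hτ0 hττ0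
      have hΓτ : Γ * τ ≤ (x.1 - (k.1 : ℝ) * ℓ) * (-Γ + (g k).1) + (x.2 - (k.2 : ℝ) * ℓ) * (g k).2
          + A k 1 + Γ * ℓ / 2 - f x := by
        have h1 := mul_le_mul_of_nonneg_left hττ0 hΓpos.le
        rwa [mul_div_cancel₀ _ (ne_of_gt hΓpos)] at h1
      have hΓτ0 : 0 ≤ Γ * τ := mul_nonneg hΓpos.le hτ0
      have hy : x + τ • ((1 : ℝ), (0 : ℝ)) = (x.1 + τ, x.2) := by
        refine Prod.ext_iff.2 ⟨?_, ?_⟩ <;> simp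
      rw [hy, hf (x.1 + τ, x.2)]
      refine le_trans ?_
        (Finset.le_sup' (fun k => mesa ℓ Γ (pt ℓ k) (A k) (g k) (x.1 + τ, x.2)) hk)
      simp only [mesa, Pc, Pr, Pt, Pl, Pb, pt]
      refine le_min ?_ (le_min ?_ (le_min ?_ (le_min ?_ ?_)))
      · linarith only [hPc]
      · linarith only [hΓτ]
      · linarith only [hPt]
      · linarith only [hPl, hΓτ0]
      · linarith only [hPb]
    have hb := abs_le.1 hG1k
    linarith only [hder, hb.1, hD, hℓε, hε]
  · -- Block 1- : x.1 < 1, (h' x).1 < -ε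
    intro hx1lt hD
    have hkc := hk
    simp only [grid, Finset.mem_product, Finset.mem_range, Nat.lt_succ_iff] at hkc
    have hD' : ε < -(h' x).1 := by linarith only [hD]
    have hstrict : (x.1 - (k.1 : ℝ) * ℓ) * (g k).1 + (x.2 - (k.2 : ℝ) * ℓ) * (g k).2 + A k 0
        < (x.1 - (k.1 : ℝ) * ℓ) * (Γ + (g k).1) + (x.2 - (k.2 : ℝ) * ℓ) * (g k).2
          + A k 3 + Γ * ℓ / 2 := by
      by_contra hcon
      push_neg at hcon
      have hΓt : Γ * (x.1 - (k.1 : ℝ) * ℓ) + Γ * ℓ / 2 ≤ 2 * δ' := by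
        linarith only [hcon, hA0.1, hA0.2, hA3.1, hA3.2]
      have hΓδ : 2 * δ' ≤ Γ * (0.01 * ℓ) := by
        linarith only [hδ01, hΓℓ]
      have ht49 : x.1 - (k.1 : ℝ) * ℓ ≤ -(0.49 * ℓ) := by
        by_contra hcc2
        push_neg at hcc2
        have hh2 := mul_lt_mul_of_pos_left hcc2 hΓpos
        linarith only [hh2, hΓt, hΓδ, hΓℓ]
      have hk1pos : 1 ≤ k.1 := by
        by_contra hNN
        push_neg at hNN
        have hk10 : k.1 = 0 := by omega
        have hk1eq : ((k.1 : ℕ) : ℝ) * ℓ = 0 := by rw [hk10]; simp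
        linarith only [ht49, hx10, hℓpos, hk1eq]
      have hk'mem : ((k.1 - 1, k.2) : ℕ × ℕ) ∈ grid N := by
        simp only [grid, Finset.mem_product, Finset.mem_range, Nat.lt_succ_iff]
        exact ⟨by omega, hkc.2⟩
      have hp'1 : (((k.1 - 1 : ℕ)) : ℝ) * ℓ = (k.1 : ℝ) * ℓ - ℓ := by
        rw [Nat.cast_sub hk1pos]; push_cast; ring
      have hnormk' : ‖pt ℓ (k.1 - 1, k.2) - x‖ ≤ 1.52 * ℓ := by
        refine norm_sub_pair_le _ _ _ _ ?_ ?_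
        · rw [hp'1, abs_le]
          constructor <;> linarith only [htu, htl, hℓpos]
        · rw [abs_sub_comm]
          exact le_trans habs_s52 (by linarith only [hℓpos])
      have hnormk152 : ‖pt ℓ k - x‖ ≤ 1.52 * ℓ := le_trans hnormk (by linarith only [hℓpos])
      have hgk' := hg (k.1 - 1, k.2) hk'mem
      have hgek' := grad_est hgk'.2 (hlip (pt ℓ (k.1 - 1, k.2)) (hptmem _ hk'mem) x hx')
        hL hnormk' (by linarith only [hℓpos])
      have hG1k' : |2 * (g (k.1 - 1, k.2)).1 - (h' x).1| ≤ 0.026 * ℓ :=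
        le_trans hgek'.1 (by linarith only [hℓpos])
      have hG2k' : |2 * (g (k.1 - 1, k.2)).2 - (h' x).2| ≤ 0.026 * ℓ :=
        le_trans hgek'.2 (by linarith only [hℓpos])
      have hG2diff : |(g (k.1 - 1, k.2)).2 - (g k).2| ≤ 0.021 * ℓ := by
        have b1 := abs_le.1 hG2k
        have b2 := abs_le.1 hG2k'
        rw [abs_le]; constructor <;> linarith only [b1.1, b1.2, b2.1, b2.2]
      have hpp' : pt ℓ (k.1 - 1, k.2) - pt ℓ k = (-ℓ, 0) := by
        have he : pt ℓ (k.1 - 1, k.2) - pt ℓ k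
            = ((((k.1 - 1 : ℕ)) : ℝ) * ℓ - (k.1 : ℝ) * ℓ, ((k.2 : ℕ) : ℝ) * ℓ - (k.2 : ℝ) * ℓ) := rfl
        rw [he, hp'1]
        refine Prod.ext_iff.2 ⟨by dsimp; ring, by dsimp; ring⟩
      have hnormpp' : ‖pt ℓ (k.1 - 1, k.2) - pt ℓ k‖ = ℓ := by
        rw [hpp', norm_pair, abs_neg, abs_of_nonneg hℓpos.le, abs_zero]
        exact max_eq_left hℓpos.le
      have htay := taylor_est L hL0 h h' hderiv hlip x (pt ℓ k) (pt ℓ (k.1 - 1, k.2)) hx'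
        (hptmem k hk) (hptmem _ hk'mem) (1.52 * ℓ) hnormk152 hnormk'
      rw [hnormpp'] at htay
      have hq1 : (pt ℓ (k.1 - 1, k.2)).1 - (pt ℓ k).1 = -ℓ := by
        show (((k.1 - 1 : ℕ)) : ℝ) * ℓ - (k.1 : ℝ) * ℓ = -ℓ
        rw [hp'1]; ring
      have hq2 : (pt ℓ (k.1 - 1, k.2)).2 - (pt ℓ k).2 = 0 := by
        show ((k.2 : ℕ) : ℝ) * ℓ - (k.2 : ℝ) * ℓ = 0
        ring
      rw [hq1, hq2] at htay
      simp only [mul_zero, add_zero, mul_neg, sub_neg_eq_add] at htay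
      have hrhs : 2 * L * (1.52 * ℓ) * ℓ ≤ 0.0304 * (ℓ * ℓ) := by
        have hprod : (0 : ℝ) ≤ (1 / 100 - L) * (ℓ * ℓ) :=
          mul_nonneg (by linarith only [hL]) (mul_nonneg hℓpos.le hℓpos.le)
        linarith only [hprod]
      have htay2 : |h (pt ℓ (k.1 - 1, k.2)) - h (pt ℓ k) + (h' x).1 * ℓ| ≤ 0.0304 * (ℓ * ℓ) :=
        le_trans htay hrhs
      have hsq : ℓ ^ 2 = ℓ * ℓ := by ring
      have e1 := abs_le.1 htay2
      have e2 := abs_le.1 hak.2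
      have e3 := abs_le.1 (ha (k.1 - 1, k.2) hk'mem).2
      have haa : (-(h' x).1) * ℓ - 0.06 * (ℓ * ℓ) ≤ a (k.1 - 1, k.2) - a k := by
        linarith only [e1.1, e2.1, e2.2, e3.1, e3.2, hsq, mul_nonneg hℓpos.le hℓpos.le]
      have hG1n : |2 * (-(g k).1) - (-(h' x).1)| ≤ 0.016 * ℓ := by
        rw [show 2 * (-(g k).1) - (-(h' x).1) = -(2 * (g k).1 - (h' x).1) by ring, abs_neg]
        exact hG1k
      have hG1n' : |2 * (-(g (k.1 - 1, k.2)).1) - (-(h' x).1)| ≤ 0.026 * ℓ := by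
        rw [show 2 * (-(g (k.1 - 1, k.2)).1) - (-(h' x).1)
          = -(2 * (g (k.1 - 1, k.2)).1 - (h' x).1) by ring, abs_neg]
        exact hG1k'
      have hw1n : |-(x.1 - (k.1 : ℝ) * ℓ)| ≤ 0.52 * ℓ := by rw [abs_neg]; exact habs_t52
      have hcore := core_est ℓ ε δ' (-(h' x).1) (a k) (a (k.1 - 1, k.2)) (-(g k).1) (g k).2
        (-(g (k.1 - 1, k.2)).1) (g (k.1 - 1, k.2)).2 (-(x.1 - (k.1 : ℝ) * ℓ)) (x.2 - (k.2 : ℝ) * ℓ)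
        hℓpos hℓε hδ'0 hδ' hε hD' haa hG1n hG1n' hG2diff hw1n habs_s52
      have hak' := ha (k.1 - 1, k.2) hk'mem
      have hAk' := hA (k.1 - 1, k.2) hk'mem
      have hA'0 := abs_le.1 (hAk' 0)
      have hA'1 := abs_le.1 (hAk' 1)
      have hA'2 := abs_le.1 (hAk' 2)
      have hA'3 := abs_le.1 (hAk' 3)
      have hA'4 := abs_le.1 (hAk' 4)
      have hg1' : |(g (k.1 - 1, k.2)).1| ≤ 0.01 := abs_le.2 ⟨hgk'.1.1.1, hgk'.1.1.2⟩
      have hg2' : |(g (k.1 - 1, k.2)).2| ≤ 0.01 := abs_le.2 ⟨hgk'.1.2.1, hgk'.1.2.2⟩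
      have habs_t' : |x.1 - ((k.1 : ℝ) * ℓ - ℓ)| ≤ 2 := by
        rw [abs_le]
        constructor <;> linarith only [htu, htl, hℓpos, hℓ1]
      have hmt1' := mul_bounds habs_t' hg1'
      have hms2' := mul_bounds habs_s hg2'
      have hbig : 0.52 * (Γ * ℓ) ≥ -(Γ * (x.1 - (k.1 : ℝ) * ℓ)) := by
        have hh3 := mul_le_mul_of_nonneg_left htl hΓpos.le
        linarith only [hh3]
      have hcontra : f x < mesa ℓ Γ (pt ℓ (k.1 - 1, k.2)) (A (k.1 - 1, k.2)) (g (k.1 - 1, k.2)) x := by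
        simp only [mesa, Pc, Pr, Pt, Pl, Pb, pt, hp'1]
        refine lt_min ?_ (lt_min ?_ (lt_min ?_ (lt_min ?_ ?_)))
        · linarith only [hcore, hA'0.1, hA0.2, hPc, hδ'0]
        · linarith only [hcore, hΓt, hPc, hA0.2, hA'1.1, hδ'0]
        · linarith only [hcore, hPt, hA2.2, hA'2.1, hδ'0]
        · linarith only [hbig, hΓℓ, hmt1'.1, hms2'.1, hA'3.1, hak'.1.1, hδ01, hfub]
        · linarith only [hcore, hPb, hA4.2, hA'4.1, hδ'0]
      have hle' : mesa ℓ Γ (pt ℓ (k.1 - 1, k.2)) (A (k.1 - 1, k.2)) (g (k.1 - 1, k.2)) x ≤ f x := by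
        rw [hf x]
        exact Finset.le_sup' (fun k => mesa ℓ Γ (pt ℓ k) (A k) (g k) x) hk'mem
      linarith only [hcontra, hle']
    have hgap : 0 < (x.1 - (k.1 : ℝ) * ℓ) * (Γ + (g k).1) + (x.2 - (k.2 : ℝ) * ℓ) * (g k).2
        + A k 3 + Γ * ℓ / 2 - f x := by
      linarith only [hPc, hstrict]
    have hder : -(g k).1 ≤ fderiv ℝ f x (-1, 0) := by
      refine fderiv_dir_ge f x (-1, 0) hdiff _ _ (div_pos hgap hΓpos) ?_
      intro τ hτ0 hττ0
      have hΓτ : Γ * τ ≤ (x.1 - (k.1 : ℝ) * ℓ) * (Γ + (g k).1) + (x.2 - (k.2 : ℝ) * ℓ) * (g k).2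
          + A k 3 + Γ * ℓ / 2 - f x := by
        have h1 := mul_le_mul_of_nonneg_left hττ0 hΓpos.le
        rwa [mul_div_cancel₀ _ (ne_of_gt hΓpos)] at h1
      have hΓτ0 : 0 ≤ Γ * τ := mul_nonneg hΓpos.le hτ0
      have hy : x + τ • ((-1 : ℝ), (0 : ℝ)) = (x.1 - τ, x.2) := by
        refine Prod.ext_iff.2 ⟨?_, ?_⟩ <;> simp <;> ring
      rw [hy, hf (x.1 - τ, x.2)]
      refine le_trans ?_
        (Finset.le_sup' (fun k => mesa ℓ Γ (pt ℓ k) (A k) (g k) (x.1 - τ, x.2)) hk)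
      simp only [mesa, Pc, Pr, Pt, Pl, Pb, pt]
      refine le_min ?_ (le_min ?_ (le_min ?_ (le_min ?_ ?_)))
      · linarith only [hPc]
      · linarith only [hPr, hΓτ0]
      · linarith only [hPt]
      · linarith only [hΓτ]
      · linarith only [hPb]
    have hneg : fderiv ℝ f x (-1, 0) = -(fderiv ℝ f x (1, 0)) := by
      have he : ((-1 : ℝ), (0 : ℝ)) = -((1 : ℝ), (0 : ℝ)) := by
        refine Prod.ext_iff.2 ⟨by norm_num, by norm_num⟩
      rw [he, map_neg]
    have hb := abs_le.1 hG1k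
    rw [hneg] at hder
    linarith only [hder, hb.2, hD, hℓε, hε]
  · -- Block 2+ : 0 < x.2, ε < (h' x).2
    intro hx2pos hD
    have hkc := hk
    simp only [grid, Finset.mem_product, Finset.mem_range, Nat.lt_succ_iff] at hkc
    have hstrict : (x.1 - (k.1 : ℝ) * ℓ) * (g k).1 + (x.2 - (k.2 : ℝ) * ℓ) * (g k).2 + A k 0
        < (x.1 - (k.1 : ℝ) * ℓ) * (g k).1 + (x.2 - (k.2 : ℝ) * ℓ) * (-Γ + (g k).2)
          + A k 2 + Γ * ℓ / 2 := by
      by_contra hcon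
      push_neg at hcon
      have hΓt : -(2 * δ') ≤ Γ * (x.2 - (k.2 : ℝ) * ℓ) - Γ * ℓ / 2 := by
        linarith only [hcon, hA0.1, hA0.2, hA2.1, hA2.2]
      have hΓδ : 2 * δ' ≤ Γ * (0.01 * ℓ) := by
        linarith only [hδ01, hΓℓ]
      have ht49 : 0.49 * ℓ ≤ x.2 - (k.2 : ℝ) * ℓ := by
        by_contra hcc2
        push_neg at hcc2
        have hh2 := mul_lt_mul_of_pos_left hcc2 hΓpos
        linarith only [hh2, hΓt, hΓδ, hΓℓ]
      have hk2N : k.2 < N := by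
        by_contra hNN
        push_neg at hNN
        have hk2e : k.2 = N := le_antisymm hkc.2 hNN
        have hk2eq : ((k.2 : ℕ) : ℝ) * ℓ = 1 := by
          rw [hk2e, mul_comm]; exact hℓN
        linarith only [ht49, hx21, hℓpos, hk2eq]
      have hk'mem : ((k.1, k.2 + 1) : ℕ × ℕ) ∈ grid N := by
        simp only [grid, Finset.mem_product, Finset.mem_range, Nat.lt_succ_iff]
        exact ⟨hkc.1, hk2N⟩
      have hp'2 : (((k.2 + 1 : ℕ)) : ℝ) * ℓ = (k.2 : ℝ) * ℓ + ℓ := by push_cast; ring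
      have hnormk' : ‖pt ℓ (k.1, k.2 + 1) - x‖ ≤ 1.52 * ℓ := by
        refine norm_sub_pair_le _ _ _ _ ?_ ?_
        · rw [abs_sub_comm]
          exact le_trans habs_t52 (by linarith only [hℓpos])
        · rw [hp'2, abs_le]
          constructor <;> linarith only [hsu, hsl, hℓpos]
      have hnormk152 : ‖pt ℓ k - x‖ ≤ 1.52 * ℓ := le_trans hnormk (by linarith only [hℓpos])
      have hgk' := hg (k.1, k.2 + 1) hk'mem
      have hgek' := grad_est hgk'.2 (hlip (pt ℓ (k.1, k.2 + 1)) (hptmem _ hk'mem) x hx')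
        hL hnormk' (by linarith only [hℓpos])
      have hG1k' : |2 * (g (k.1, k.2 + 1)).1 - (h' x).1| ≤ 0.026 * ℓ :=
        le_trans hgek'.1 (by linarith only [hℓpos])
      have hG2k' : |2 * (g (k.1, k.2 + 1)).2 - (h' x).2| ≤ 0.026 * ℓ :=
        le_trans hgek'.2 (by linarith only [hℓpos])
      have hG1diff : |(g (k.1, k.2 + 1)).1 - (g k).1| ≤ 0.021 * ℓ := by
        have b1 := abs_le.1 hG1k
        have b2 := abs_le.1 hG1k'
        rw [abs_le]; constructor <;> linarith only [b1.1, b1.2, b2.1, b2.2]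
      have hpp' : pt ℓ (k.1, k.2 + 1) - pt ℓ k = (0, ℓ) := by
        have he : pt ℓ (k.1, k.2 + 1) - pt ℓ k
            = (((k.1 : ℕ) : ℝ) * ℓ - (k.1 : ℝ) * ℓ, (((k.2 + 1 : ℕ)) : ℝ) * ℓ - (k.2 : ℝ) * ℓ) := rfl
        rw [he, hp'2]
        refine Prod.ext_iff.2 ⟨by dsimp; ring, by dsimp; ring⟩
      have hnormpp' : ‖pt ℓ (k.1, k.2 + 1) - pt ℓ k‖ = ℓ := by
        rw [hpp', norm_pair, abs_of_nonneg hℓpos.le, abs_zero]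
        exact max_eq_right hℓpos.le
      have htay := taylor_est L hL0 h h' hderiv hlip x (pt ℓ k) (pt ℓ (k.1, k.2 + 1)) hx'
        (hptmem k hk) (hptmem _ hk'mem) (1.52 * ℓ) hnormk152 hnormk'
      rw [hnormpp'] at htay
      have hq1 : (pt ℓ (k.1, k.2 + 1)).1 - (pt ℓ k).1 = 0 := by
        show ((k.1 : ℕ) : ℝ) * ℓ - (k.1 : ℝ) * ℓ = 0
        ring
      have hq2 : (pt ℓ (k.1, k.2 + 1)).2 - (pt ℓ k).2 = ℓ := by
        show (((k.2 + 1 : ℕ)) : ℝ) * ℓ - (k.2 : ℝ) * ℓ = ℓ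
        rw [hp'2]; ring
      rw [hq1, hq2] at htay
      simp only [mul_zero, zero_add] at htay
      have hrhs : 2 * L * (1.52 * ℓ) * ℓ ≤ 0.0304 * (ℓ * ℓ) := by
        have hprod : (0 : ℝ) ≤ (1 / 100 - L) * (ℓ * ℓ) :=
          mul_nonneg (by linarith only [hL]) (mul_nonneg hℓpos.le hℓpos.le)
        linarith only [hprod]
      have htay2 : |h (pt ℓ (k.1, k.2 + 1)) - h (pt ℓ k) - (h' x).2 * ℓ| ≤ 0.0304 * (ℓ * ℓ) :=
        le_trans htay hrhs
      have hsq : ℓ ^ 2 = ℓ * ℓ := by ring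
      have e1 := abs_le.1 htay2
      have e2 := abs_le.1 hak.2
      have e3 := abs_le.1 (ha (k.1, k.2 + 1) hk'mem).2
      have haa : (h' x).2 * ℓ - 0.06 * (ℓ * ℓ) ≤ a (k.1, k.2 + 1) - a k := by
        linarith only [e1.1, e2.1, e2.2, e3.1, e3.2, hsq, mul_nonneg hℓpos.le hℓpos.le]
      have hcore := core_est ℓ ε δ' ((h' x).2) (a k) (a (k.1, k.2 + 1)) (g k).2 (g k).1
        (g (k.1, k.2 + 1)).2 (g (k.1, k.2 + 1)).1 (x.2 - (k.2 : ℝ) * ℓ) (x.1 - (k.1 : ℝ) * ℓ)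
        hℓpos hℓε hδ'0 hδ' hε hD haa hG2k hG2k' hG1diff habs_s52 habs_t52
      have hak' := ha (k.1, k.2 + 1) hk'mem
      have hAk' := hA (k.1, k.2 + 1) hk'mem
      have hA'0 := abs_le.1 (hAk' 0)
      have hA'1 := abs_le.1 (hAk' 1)
      have hA'2 := abs_le.1 (hAk' 2)
      have hA'3 := abs_le.1 (hAk' 3)
      have hA'4 := abs_le.1 (hAk' 4)
      have hg1' : |(g (k.1, k.2 + 1)).1| ≤ 0.01 := abs_le.2 ⟨hgk'.1.1.1, hgk'.1.1.2⟩
      have hg2' : |(g (k.1, k.2 + 1)).2| ≤ 0.01 := abs_le.2 ⟨hgk'.1.2.1, hgk'.1.2.2⟩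
      have habs_s' : |x.2 - ((k.2 : ℝ) * ℓ + ℓ)| ≤ 2 := by
        rw [abs_le]
        constructor <;> linarith only [hsu, hsl, hℓpos, hℓ1]
      have hms2' := mul_bounds habs_s' hg2'
      have hmt1' := mul_bounds habs_t hg1'
      have hbig : Γ * (x.2 - (k.2 : ℝ) * ℓ) ≤ 0.52 * (Γ * ℓ) := by
        have hh3 := mul_le_mul_of_nonneg_left hsu hΓpos.le
        linarith only [hh3]
      have hcontra : f x < mesa ℓ Γ (pt ℓ (k.1, k.2 + 1)) (A (k.1, k.2 + 1)) (g (k.1, k.2 + 1)) x := by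
        simp only [mesa, Pc, Pr, Pt, Pl, Pb, pt]
        push_cast
        refine lt_min ?_ (lt_min ?_ (lt_min ?_ (lt_min ?_ ?_)))
        · linarith only [hcore, hA'0.1, hA0.2, hPc, hδ'0]
        · linarith only [hcore, hPr, hA1.2, hA'1.1, hδ'0]
        · linarith only [hbig, hΓℓ, hms2'.1, hmt1'.1, hA'2.1, hak'.1.1, hδ01, hfub]
        · linarith only [hcore, hPl, hA3.2, hA'3.1, hδ'0]
        · linarith only [hcore, hΓt, hPc, hA0.2, hA'4.1, hδ'0]
      have hle' : mesa ℓ Γ (pt ℓ (k.1, k.2 + 1)) (A (k.1, k.2 + 1)) (g (k.1, k.2 + 1)) x ≤ f x := by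
        rw [hf x]
        exact Finset.le_sup' (fun k => mesa ℓ Γ (pt ℓ k) (A k) (g k) x) hk'mem
      linarith only [hcontra, hle']
    have hgap : 0 < (x.1 - (k.1 : ℝ) * ℓ) * (g k).1 + (x.2 - (k.2 : ℝ) * ℓ) * (-Γ + (g k).2)
        + A k 2 + Γ * ℓ / 2 - f x := by
      linarith only [hPc, hstrict]
    have hder : (g k).2 ≤ fderiv ℝ f x (0, 1) := by
      refine fderiv_dir_ge f x (0, 1) hdiff _ _ (div_pos hgap hΓpos) ?_
      intro τ hτ0 hττ0
      have hΓτ : Γ * τ ≤ (x.1 - (k.1 : ℝ) * ℓ) * (g k).1 + (x.2 - (k.2 : ℝ) * ℓ) * (-Γ + (g k).2)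
          + A k 2 + Γ * ℓ / 2 - f x := by
        have h1 := mul_le_mul_of_nonneg_left hττ0 hΓpos.le
        rwa [mul_div_cancel₀ _ (ne_of_gt hΓpos)] at h1
      have hΓτ0 : 0 ≤ Γ * τ := mul_nonneg hΓpos.le hτ0
      have hy : x + τ • ((0 : ℝ), (1 : ℝ)) = (x.1, x.2 + τ) := by
        refine Prod.ext_iff.2 ⟨?_, ?_⟩ <;> simp
      rw [hy, hf (x.1, x.2 + τ)]
      refine le_trans ?_
        (Finset.le_sup' (fun k => mesa ℓ Γ (pt ℓ k) (A k) (g k) (x.1, x.2 + τ)) hk)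
      simp only [mesa, Pc, Pr, Pt, Pl, Pb, pt]
      refine le_min ?_ (le_min ?_ (le_min ?_ (le_min ?_ ?_)))
      · linarith only [hPc]
      · linarith only [hPr]
      · linarith only [hΓτ]
      · linarith only [hPl]
      · linarith only [hPb, hΓτ0]
    have hb := abs_le.1 hG2k
    linarith only [hder, hb.1, hD, hℓε, hε]
  · -- Block 2- : x.2 < 1, (h' x).2 < -ε
    intro hx2lt hD
    have hkc := hk
    simp only [grid, Finset.mem_product, Finset.mem_range, Nat.lt_succ_iff] at hkc
    have hD' : ε < -(h' x).2 := by linarith only [hD]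
    have hstrict : (x.1 - (k.1 : ℝ) * ℓ) * (g k).1 + (x.2 - (k.2 : ℝ) * ℓ) * (g k).2 + A k 0
        < (x.1 - (k.1 : ℝ) * ℓ) * (g k).1 + (x.2 - (k.2 : ℝ) * ℓ) * (Γ + (g k).2)
          + A k 4 + Γ * ℓ / 2 := by
      by_contra hcon
      push_neg at hcon
      have hΓt : Γ * (x.2 - (k.2 : ℝ) * ℓ) + Γ * ℓ / 2 ≤ 2 * δ' := by
        linarith only [hcon, hA0.1, hA0.2, hA4.1, hA4.2]
      have hΓδ : 2 * δ' ≤ Γ * (0.01 * ℓ) := by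
        linarith only [hδ01, hΓℓ]
      have ht49 : x.2 - (k.2 : ℝ) * ℓ ≤ -(0.49 * ℓ) := by
        by_contra hcc2
        push_neg at hcc2
        have hh2 := mul_lt_mul_of_pos_left hcc2 hΓpos
        linarith only [hh2, hΓt, hΓδ, hΓℓ]
      have hk2pos : 1 ≤ k.2 := by
        by_contra hNN
        push_neg at hNN
        have hk20 : k.2 = 0 := by omega
        have hk2eq : ((k.2 : ℕ) : ℝ) * ℓ = 0 := by rw [hk20]; simp
        linarith only [ht49, hx20, hℓpos, hk2eq]
      have hk'mem : ((k.1, k.2 - 1) : ℕ × ℕ) ∈ grid N := by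
        simp only [grid, Finset.mem_product, Finset.mem_range, Nat.lt_succ_iff]
        exact ⟨hkc.1, by omega⟩
      have hp'2 : (((k.2 - 1 : ℕ)) : ℝ) * ℓ = (k.2 : ℝ) * ℓ - ℓ := by
        rw [Nat.cast_sub hk2pos]; push_cast; ring
      have hnormk' : ‖pt ℓ (k.1, k.2 - 1) - x‖ ≤ 1.52 * ℓ := by
        refine norm_sub_pair_le _ _ _ _ ?_ ?_
        · rw [abs_sub_comm]
          exact le_trans habs_t52 (by linarith only [hℓpos])
        · rw [hp'2, abs_le]
          constructor <;> linarith only [hsu, hsl, hℓpos]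
      have hnormk152 : ‖pt ℓ k - x‖ ≤ 1.52 * ℓ := le_trans hnormk (by linarith only [hℓpos])
      have hgk' := hg (k.1, k.2 - 1) hk'mem
      have hgek' := grad_est hgk'.2 (hlip (pt ℓ (k.1, k.2 - 1)) (hptmem _ hk'mem) x hx')
        hL hnormk' (by linarith only [hℓpos])
      have hG1k' : |2 * (g (k.1, k.2 - 1)).1 - (h' x).1| ≤ 0.026 * ℓ :=
        le_trans hgek'.1 (by linarith only [hℓpos])
      have hG2k' : |2 * (g (k.1, k.2 - 1)).2 - (h' x).2| ≤ 0.026 * ℓ :=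
        le_trans hgek'.2 (by linarith only [hℓpos])
      have hG1diff : |(g (k.1, k.2 - 1)).1 - (g k).1| ≤ 0.021 * ℓ := by
        have b1 := abs_le.1 hG1k
        have b2 := abs_le.1 hG1k'
        rw [abs_le]; constructor <;> linarith only [b1.1, b1.2, b2.1, b2.2]
      have hpp' : pt ℓ (k.1, k.2 - 1) - pt ℓ k = (0, -ℓ) := by
        have he : pt ℓ (k.1, k.2 - 1) - pt ℓ k
            = (((k.1 : ℕ) : ℝ) * ℓ - (k.1 : ℝ) * ℓ, (((k.2 - 1 : ℕ)) : ℝ) * ℓ - (k.2 : ℝ) * ℓ) := rfl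
        rw [he, hp'2]
        refine Prod.ext_iff.2 ⟨by dsimp; ring, by dsimp; ring⟩
      have hnormpp' : ‖pt ℓ (k.1, k.2 - 1) - pt ℓ k‖ = ℓ := by
        rw [hpp', norm_pair, abs_neg, abs_of_nonneg hℓpos.le, abs_zero]
        exact max_eq_right hℓpos.le
      have htay := taylor_est L hL0 h h' hderiv hlip x (pt ℓ k) (pt ℓ (k.1, k.2 - 1)) hx'
        (hptmem k hk) (hptmem _ hk'mem) (1.52 * ℓ) hnormk152 hnormk'
      rw [hnormpp'] at htay
      have hq1 : (pt ℓ (k.1, k.2 - 1)).1 - (pt ℓ k).1 = 0 := by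
        show ((k.1 : ℕ) : ℝ) * ℓ - (k.1 : ℝ) * ℓ = 0
        ring
      have hq2 : (pt ℓ (k.1, k.2 - 1)).2 - (pt ℓ k).2 = -ℓ := by
        show (((k.2 - 1 : ℕ)) : ℝ) * ℓ - (k.2 : ℝ) * ℓ = -ℓ
        rw [hp'2]; ring
      rw [hq1, hq2] at htay
      simp only [mul_zero, zero_add, mul_neg, sub_neg_eq_add] at htay
      have hrhs : 2 * L * (1.52 * ℓ) * ℓ ≤ 0.0304 * (ℓ * ℓ) := by
        have hprod : (0 : ℝ) ≤ (1 / 100 - L) * (ℓ * ℓ) :=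
          mul_nonneg (by linarith only [hL]) (mul_nonneg hℓpos.le hℓpos.le)
        linarith only [hprod]
      have htay2 : |h (pt ℓ (k.1, k.2 - 1)) - h (pt ℓ k) + (h' x).2 * ℓ| ≤ 0.0304 * (ℓ * ℓ) :=
        le_trans htay hrhs
      have hsq : ℓ ^ 2 = ℓ * ℓ := by ring
      have e1 := abs_le.1 htay2
      have e2 := abs_le.1 hak.2
      have e3 := abs_le.1 (ha (k.1, k.2 - 1) hk'mem).2
      have haa : (-(h' x).2) * ℓ - 0.06 * (ℓ * ℓ) ≤ a (k.1, k.2 - 1) - a k := by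
        linarith only [e1.1, e2.1, e2.2, e3.1, e3.2, hsq, mul_nonneg hℓpos.le hℓpos.le]
      have hG2n : |2 * (-(g k).2) - (-(h' x).2)| ≤ 0.016 * ℓ := by
        rw [show 2 * (-(g k).2) - (-(h' x).2) = -(2 * (g k).2 - (h' x).2) by ring, abs_neg]
        exact hG2k
      have hG2n' : |2 * (-(g (k.1, k.2 - 1)).2) - (-(h' x).2)| ≤ 0.026 * ℓ := by
        rw [show 2 * (-(g (k.1, k.2 - 1)).2) - (-(h' x).2)
          = -(2 * (g (k.1, k.2 - 1)).2 - (h' x).2) by ring, abs_neg]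
        exact hG2k'
      have hw1n : |-(x.2 - (k.2 : ℝ) * ℓ)| ≤ 0.52 * ℓ := by rw [abs_neg]; exact habs_s52
      have hcore := core_est ℓ ε δ' (-(h' x).2) (a k) (a (k.1, k.2 - 1)) (-(g k).2) (g k).1
        (-(g (k.1, k.2 - 1)).2) (g (k.1, k.2 - 1)).1 (-(x.2 - (k.2 : ℝ) * ℓ)) (x.1 - (k.1 : ℝ) * ℓ)
        hℓpos hℓε hδ'0 hδ' hε hD' haa hG2n hG2n' hG1diff hw1n habs_t52
      have hak' := ha (k.1, k.2 - 1) hk'mem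
      have hAk' := hA (k.1, k.2 - 1) hk'mem
      have hA'0 := abs_le.1 (hAk' 0)
      have hA'1 := abs_le.1 (hAk' 1)
      have hA'2 := abs_le.1 (hAk' 2)
      have hA'3 := abs_le.1 (hAk' 3)
      have hA'4 := abs_le.1 (hAk' 4)
      have hg1' : |(g (k.1, k.2 - 1)).1| ≤ 0.01 := abs_le.2 ⟨hgk'.1.1.1, hgk'.1.1.2⟩
      have hg2' : |(g (k.1, k.2 - 1)).2| ≤ 0.01 := abs_le.2 ⟨hgk'.1.2.1, hgk'.1.2.2⟩
      have habs_s' : |x.2 - ((k.2 : ℝ) * ℓ - ℓ)| ≤ 2 := by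
        rw [abs_le]
        constructor <;> linarith only [hsu, hsl, hℓpos, hℓ1]
      have hms2' := mul_bounds habs_s' hg2'
      have hmt1' := mul_bounds habs_t hg1'
      have hbig : 0.52 * (Γ * ℓ) ≥ -(Γ * (x.2 - (k.2 : ℝ) * ℓ)) := by
        have hh3 := mul_le_mul_of_nonneg_left hsl hΓpos.le
        linarith only [hh3]
      have hcontra : f x < mesa ℓ Γ (pt ℓ (k.1, k.2 - 1)) (A (k.1, k.2 - 1)) (g (k.1, k.2 - 1)) x := by
        simp only [mesa, Pc, Pr, Pt, Pl, Pb, pt, hp'2]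
        refine lt_min ?_ (lt_min ?_ (lt_min ?_ (lt_min ?_ ?_)))
        · linarith only [hcore, hA'0.1, hA0.2, hPc, hδ'0]
        · linarith only [hcore, hPr, hA1.2, hA'1.1, hδ'0]
        · linarith only [hcore, hΓt, hPc, hA0.2, hA'2.1, hδ'0]
        · linarith only [hcore, hPl, hA3.2, hA'3.1, hδ'0]
        · linarith only [hbig, hΓℓ, hms2'.1, hmt1'.1, hA'4.1, hak'.1.1, hδ01, hfub]
      have hle' : mesa ℓ Γ (pt ℓ (k.1, k.2 - 1)) (A (k.1, k.2 - 1)) (g (k.1, k.2 - 1)) x ≤ f x := by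
        rw [hf x]
        exact Finset.le_sup' (fun k => mesa ℓ Γ (pt ℓ k) (A k) (g k) x) hk'mem
      linarith only [hcontra, hle']
    have hgap : 0 < (x.1 - (k.1 : ℝ) * ℓ) * (g k).1 + (x.2 - (k.2 : ℝ) * ℓ) * (Γ + (g k).2)
        + A k 4 + Γ * ℓ / 2 - f x := by
      linarith only [hPc, hstrict]
    have hder : -(g k).2 ≤ fderiv ℝ f x (0, -1) := by
      refine fderiv_dir_ge f x (0, -1) hdiff _ _ (div_pos hgap hΓpos) ?_
      intro τ hτ0 hττ0
      have hΓτ : Γ * τ ≤ (x.1 - (k.1 : ℝ) * ℓ) * (g k).1 + (x.2 - (k.2 : ℝ) * ℓ) * (Γ + (g k).2)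
          + A k 4 + Γ * ℓ / 2 - f x := by
        have h1 := mul_le_mul_of_nonneg_left hττ0 hΓpos.le
        rwa [mul_div_cancel₀ _ (ne_of_gt hΓpos)] at h1
      have hΓτ0 : 0 ≤ Γ * τ := mul_nonneg hΓpos.le hτ0
      have hy : x + τ • ((0 : ℝ), (-1 : ℝ)) = (x.1, x.2 - τ) := by
        refine Prod.ext_iff.2 ⟨?_, ?_⟩ <;> simp <;> ring
      rw [hy, hf (x.1, x.2 - τ)]
      refine le_trans ?_
        (Finset.le_sup' (fun k => mesa ℓ Γ (pt ℓ k) (A k) (g k) (x.1, x.2 - τ)) hk)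
      simp only [mesa, Pc, Pr, Pt, Pl, Pb, pt]
      refine le_min ?_ (le_min ?_ (le_min ?_ (le_min ?_ ?_)))
      · linarith only [hPc]
      · linarith only [hPr]
      · linarith only [hPt, hΓτ0]
      · linarith only [hPl]
      · linarith only [hΓτ]
    have hneg : fderiv ℝ f x (0, -1) = -(fderiv ℝ f x (0, 1)) := by
      have he : ((0 : ℝ), (-1 : ℝ)) = -((0 : ℝ), (1 : ℝ)) := by
        refine Prod.ext_iff.2 ⟨by norm_num, by norm_num⟩
      rw [he, map_neg]
    have hb := abs_le.1 hG2k
    rw [hneg] at hder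
    linarith only [hder, hb.2, hD, hℓε, hε]

end
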